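/- For every nondeterministic co-Büchi automaton A with n states there is a deterministic Büchi automaton A' with at most 3^n states such that L(A') equals the complement of L(A). -/

import Mathlib

/-- A nondeterministic parity automaton over the alphabet `A`: a finite set of
states, an initial state, a transition relation and a priority function. -/
structure NPA (A : Type) where
  Q : Type
  fin : Fintype Q
  init : Q
  trans : Q → A → Q → Prop
  prio : Q → ℕ

attribute [instance] NPA.fin

namespace NPA

variable {A : Type}

/-- The size of an automaton is the number of its states. -/
def size (M : NPA A) : ℕ := Fintype.card M.Q

/-- The index of a parity automaton is the number of distinct priorities. -/
def index (M : NPA A) : ℕ := (Finset.univ.image M.prio).card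

/-- A run of the automaton on an ω-word. -/
def IsRun (M : NPA A) (w : ℕ → A) (ρ : ℕ → M.Q) : Prop :=
  ρ 0 = M.init ∧ ∀ i, M.trans (ρ i) (w i) (ρ (i + 1))

/-- A run is accepting iff the maximal priority of a state occurring infinitely
often in it is even. -/
def AcceptingRun (M : NPA A) (ρ : ℕ → M.Q) : Prop :=
  ∃ p : ℕ, Even p ∧ (∃ q : M.Q, M.prio q = p ∧ {i | ρ i = q}.Infinite) ∧
    ∀ q : M.Q, {i | ρ i = q}.Infinite → M.prio q ≤ p

/-- The ω-language of the automaton. -/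
def Lang (M : NPA A) : Set (ℕ → A) :=
  {w | ∃ ρ : ℕ → M.Q, M.IsRun w ρ ∧ M.AcceptingRun ρ}

/-- The automaton is deterministic: exactly one transition per state and letter. -/
def Deterministic (M : NPA A) : Prop :=
  ∀ (q : M.Q) (a : A), ∃! q' : M.Q, M.trans q a q'

/-- A Büchi automaton: all priorities are `1` or `2`. -/
def IsBuchi (M : NPA A) : Prop := ∀ q : M.Q, M.prio q = 1 ∨ M.prio q = 2

/-- A co-Büchi automaton: all priorities are `0` or `1`. -/
def IsCoBuchi (M : NPA A) : Prop := ∀ q : M.Q, M.prio q = 0 ∨ M.prio q = 1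

end NPA

namespace MHaux

open Classical

variable {A : Type} (M : NPA A)

/-- pigeonhole -/
lemma pigeon {α : Type*} [Finite α] (g : ℕ → α) : ∃ y, {i | g i = y}.Infinite := by
  obtain ⟨y, hy⟩ := Finite.exists_infinite_fiber g
  exact ⟨y, Set.infinite_coe_iff.mp hy⟩

lemma inf_exists_ge {s : Set ℕ} (hs : s.Infinite) (m : ℕ) : ∃ i ∈ s, m ≤ i := by
  by_contra h
  push_neg at h
  exact hs (Set.Finite.subset (Set.finite_Iio m) (fun i hi => h i hi))

def Sc (f : M.Q → Fin 3) (a : A) (q' : M.Q) : Prop := ∃ q, f q ≠ 0 ∧ M.trans q a q'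

noncomputable def Oc (f : M.Q → Fin 3) (a : A) (q' : M.Q) : Prop :=
  (if ∃ q, f q = 2 then ∃ q, f q = 2 ∧ M.trans q a q' else Sc M f a q') ∧ M.prio q' ≠ 1

lemma Oc_imp_Sc {f : M.Q → Fin 3} {a : A} {q' : M.Q} (h : Oc M f a q') : Sc M f a q' := by
  obtain ⟨h1, -⟩ := h
  by_cases hO : ∃ q, f q = 2
  · rw [if_pos hO] at h1
    obtain ⟨q, hq, ht⟩ := h1
    exact ⟨q, by rw [hq]; decide, ht⟩
  · rwa [if_neg hO] at h1

noncomputable def step (f : M.Q → Fin 3) (a : A) : M.Q → Fin 3 := fun q' =>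
  if Oc M f a q' then 2 else if Sc M f a q' then 1 else 0

noncomputable def MH : NPA A where
  Q := M.Q → Fin 3
  fin := inferInstance
  init := fun q => if q = M.init then 2 else 0
  trans := fun f a f' => f' = step M f a
  prio := fun f => if ∃ q, f q = 2 then 1 else 2

lemma step_eq_two_iff (f : M.Q → Fin 3) (a : A) (q' : M.Q) :
    step M f a q' = 2 ↔ Oc M f a q' := by
  by_cases hO : Oc M f a q'
  · simp [step, hO]
  · by_cases hS : Sc M f a q' <;> simp [step, hO, hS] <;> decide

lemma step_ne_zero_iff (f : M.Q → Fin 3) (a : A) (q' : M.Q) :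
    step M f a q' ≠ 0 ↔ Sc M f a q' := by
  by_cases hO : Oc M f a q'
  · simpa [step, hO] using Oc_imp_Sc M hO
  · by_cases hS : Sc M f a q' <;> simp [step, hO, hS] <;> decide

variable (w : ℕ → A)

noncomputable def mh : ℕ → (M.Q → Fin 3)
  | 0 => fun q => if q = M.init then 2 else 0
  | n+1 => step M (mh n) (w n)

lemma mh_isRun : (MH M).IsRun w (mh M w) := ⟨rfl, fun _ => rfl⟩

lemma run_eq_mh {ρ : ℕ → (MH M).Q} (h : (MH M).IsRun w ρ) : ρ = mh M w := by
  funext n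
  induction n with
  | zero => exact h.1
  | succ n ih =>
      have := h.2 n
      rw [ih] at this
      exact this

lemma mem_S_of_run {ρ : ℕ → M.Q} (h : M.IsRun w ρ) (n : ℕ) : mh M w n (ρ n) ≠ 0 := by
  induction n with
  | zero => simp [mh, h.1]
  | succ n ih => exact (step_ne_zero_iff M _ _ _).mpr ⟨ρ n, ih, h.2 n⟩

lemma O_prio {n : ℕ} {q' : M.Q} (h : mh M w (n+1) q' = 2) : M.prio q' ≠ 1 :=
  ((step_eq_two_iff M _ _ _).mp h).2

lemma O_back {n : ℕ} {q' : M.Q} (hne : ∃ r, mh M w n r = 2)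
    (h : mh M w (n+1) q' = 2) : ∃ q, mh M w n q = 2 ∧ M.trans q (w n) q' := by
  have := ((step_eq_two_iff M _ _ _).mp h).1
  rwa [if_pos hne] at this

lemma S_path : ∀ (n : ℕ) (q' : M.Q), mh M w n q' ≠ 0 →
    ∃ σ : ℕ → M.Q, σ 0 = M.init ∧ (∀ i < n, M.trans (σ i) (w i) (σ (i+1))) ∧ σ n = q' := by
  intro n
  induction n with
  | zero =>
      intro q' h
      have hq : q' = M.init := by by_contra hcon; simp [mh, hcon] at h
      exact ⟨fun _ => M.init, rfl, fun i hi => absurd hi (Nat.not_lt_zero i), hq.symm ▸ rfl⟩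
  | succ n ih =>
      intro q' h
      obtain ⟨q, hq, ht⟩ := (step_ne_zero_iff M _ _ _).mp h
      obtain ⟨σ, h0, hT, hn⟩ := ih q hq
      refine ⟨fun i => if i ≤ n then σ i else q', by simp [h0], ?_, by simp⟩
      intro i hi
      rcases Nat.lt_or_ge i n with hin | hin
      · simpa [Nat.le_of_lt hin, Nat.succ_le_of_lt hin] using hT i hin
      · have hieq : i = n := by omega
        subst hieq
        simpa [hn] using ht

/-- Partial runs staying in the `O`-component. -/
def P (n m : ℕ) (q : M.Q) : Prop :=
  ∃ σ : ℕ → M.Q, σ n = q ∧ (∀ i, n ≤ i → i < m → M.trans (σ i) (w i) (σ (i+1))) ∧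
    (∀ i, n ≤ i → i ≤ m → mh M w i (σ i) = 2)

lemma P_self {n : ℕ} {q : M.Q} (h : mh M w n q = 2) : P M w n n q :=
  ⟨fun _ => q, rfl, fun i h1 h2 => absurd (lt_of_le_of_lt h1 h2) (lt_irrefl n),
   fun i h1 h2 => by rwa [le_antisymm h2 h1]⟩

lemma P_mono {n m m' : ℕ} (hm : m ≤ m') {q : M.Q} (h : P M w n m' q) : P M w n m q := by
  obtain ⟨σ, h1, h2, h3⟩ := h
  exact ⟨σ, h1, fun i hi hi' => h2 i hi (lt_of_lt_of_le hi' hm),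
    fun i hi hi' => h3 i hi (le_trans hi' hm)⟩

lemma P_start {n m : ℕ} {q : M.Q} (h : P M w n m q) (hnm : n ≤ m) : mh M w n q = 2 := by
  obtain ⟨σ, h1, -, h3⟩ := h
  rw [← h1]
  exact h3 n le_rfl hnm

lemma P_back {n m : ℕ} {q' : M.Q} (hne : ∃ r, mh M w n r = 2) (hm : n + 1 ≤ m)
    (h : P M w (n+1) m q') : ∃ q, P M w n m q := by
  obtain ⟨σ, h1, h2, h3⟩ := h
  have hσ : mh M w (n+1) (σ (n+1)) = 2 := h3 (n+1) le_rfl hm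
  obtain ⟨q, hq2, hqt⟩ := O_back M w hne hσ
  refine ⟨q, fun i => if i ≤ n then q else σ i, by simp, ?_, ?_⟩
  · intro i hi hi'
    rcases Nat.eq_or_lt_of_le hi with hieq | hilt
    · subst hieq
      simpa [h1, Nat.lt_irrefl] using hqt
    · have : ¬ (i ≤ n) := by omega
      have h2' : ¬ (i + 1 ≤ n) := by omega
      simpa [this, h2'] using h2 i hilt hi'
  · intro i hi hi'
    rcases Nat.eq_or_lt_of_le hi with hieq | hilt
    · subst hieq; simpa using hq2
    · have : ¬ (i ≤ n) := by omega
      simpa [this] using h3 i hilt hi'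

lemma P_exists {t0 : ℕ} (hne : ∀ n, t0 ≤ n → ∃ r, mh M w n r = 2) :
    ∀ (k n : ℕ), t0 ≤ n → ∃ q, P M w n (n + k) q := by
  intro k
  induction k with
  | zero =>
      intro n hn
      obtain ⟨r, hr⟩ := hne n hn
      exact ⟨r, P_self M w hr⟩
  | succ k ih =>
      intro n hn
      obtain ⟨q', hq'⟩ := ih (n+1) (by omega)
      have hq'' : P M w (n+1) (n + (k+1)) q' := by
        have : n + 1 + k = n + (k + 1) := by omega
        rwa [this] at hq'
      obtain ⟨q, hq⟩ := P_back M w (hne n hn) (by omega) hq''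
      exact ⟨q, hq⟩

def G (n : ℕ) (q : M.Q) : Prop := ∀ m, P M w n (n + m) q

lemma G_nonempty {t0 : ℕ} (hne : ∀ n, t0 ≤ n → ∃ r, mh M w n r = 2)
    {n : ℕ} (hn : t0 ≤ n) : ∃ q, G M w n q := by
  choose g hg using fun k => P_exists M w hne k n hn
  obtain ⟨q, hq⟩ := pigeon g
  refine ⟨q, fun m => ?_⟩
  obtain ⟨k, hk, hkm⟩ := inf_exists_ge hq m
  have hk' : g k = q := hk
  have := hg k
  rw [hk'] at this
  exact P_mono M w (by omega) this

lemma G_step {n : ℕ} {q : M.Q} (h : G M w n q) :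
    ∃ q', M.trans q (w n) q' ∧ G M w (n+1) q' := by
  choose σ hσ1 hσ2 hσ3 using fun m => h (1 + m)
  obtain ⟨q', hq'⟩ := pigeon (fun m => σ m (n+1))
  have key : ∀ m, σ m (n+1) = q' → P M w (n+1) (n+1+m) (σ m (n+1)) := by
    intro m _
    exact ⟨σ m, rfl, fun i hi hi' => hσ2 m i (by omega) (by omega),
      fun i hi hi' => hσ3 m i (by omega) (by omega)⟩
  obtain ⟨k0, hk0, -⟩ := inf_exists_ge hq' 0
  have hk0' : σ k0 (n+1) = q' := hk0
  refine ⟨q', ?_, ?_⟩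
  · have := hσ2 k0 n le_rfl (by omega)
    rwa [hσ1 k0, hk0'] at this
  · intro m
    obtain ⟨k, hk, hkm⟩ := inf_exists_ge hq' m
    have hk' : σ k (n+1) = q' := hk
    have := key k hk'
    rw [hk'] at this
    exact P_mono M w (by omega) this

noncomputable def ext {n : ℕ} (p : {q : M.Q // G M w n q}) : {q' : M.Q // G M w (n+1) q'} :=
  ⟨(G_step M w p.2).choose, (G_step M w p.2).choose_spec.2⟩

lemma ext_trans {n : ℕ} (p : {q : M.Q // G M w n q}) :
    M.trans p.1 (w n) (ext M w p).1 :=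
  (G_step M w p.2).choose_spec.1

noncomputable def chain {t0 : ℕ} (h0 : ∃ q, G M w t0 q) : (k : ℕ) → {q : M.Q // G M w (t0 + k) q}
  | 0 => ⟨h0.choose, h0.choose_spec⟩
  | k+1 => ext M w (chain h0 k)

lemma MH_isBuchi : (MH M).IsBuchi := by
  intro f
  by_cases h : ∃ q, f q = 2 <;> simp [MH, h]

lemma MH_prio_eq_two_iff (f : M.Q → Fin 3) :
    (MH M).prio f = 2 ↔ ¬∃ q, f q = 2 := by
  by_cases h : ∃ q, f q = 2 <;> simp [MH, h]

lemma mem_lang_of_inf (hinf : {m | ¬∃ r, mh M w m r = 2}.Infinite) : w ∈ (MH M).Lang := by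
  have hwitness : ∃ f : M.Q → Fin 3, (¬∃ q, f q = 2) ∧ {i | mh M w i = f}.Infinite := by
    by_contra h
    push_neg at h
    apply hinf
    have hsub : {m | ¬∃ r, mh M w m r = 2} ⊆
        ⋃ f ∈ {f : M.Q → Fin 3 | ¬∃ q, f q = 2}, {i | mh M w i = f} := by
      intro m hm
      exact Set.mem_biUnion hm rfl
    refine Set.Finite.subset (Set.Finite.biUnion (Set.toFinite _) ?_) hsub
    intro f hf
    exact h f (fun q hq => hf ⟨q, hq⟩)
  obtain ⟨f, hf, hfi⟩ := hwitness
  refine ⟨mh M w, mh_isRun M w, 2, even_two, ⟨f, (MH_prio_eq_two_iff M f).mpr hf, hfi⟩, ?_⟩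
  intro g hg
  rcases MH_isBuchi M g with h | h <;> omega

lemma not_mem_of_mem (hc : M.IsCoBuchi) (hw : w ∈ M.Lang) : w ∉ (MH M).Lang := by
  obtain ⟨ρ, hρ, p, hpe, ⟨q0, hq0, hq0i⟩, hmax⟩ := hw
  have hp0 : p = 0 := by
    rw [Nat.even_iff] at hpe
    rcases hc q0 with h | h <;> omega
  have hfin : {i | M.prio (ρ i) = 1}.Finite := by
    have hsub : {i | M.prio (ρ i) = 1} ⊆ ⋃ q ∈ {q : M.Q | M.prio q = 1}, {i | ρ i = q} :=
      fun i hi => Set.mem_biUnion hi rfl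
    refine Set.Finite.subset (Set.Finite.biUnion (Set.toFinite _) ?_) hsub
    intro q hq
    by_contra hinf
    have h2 := hmax q hinf
    have hq' : M.prio q = 1 := hq
    omega
  obtain ⟨t1, ht1⟩ := hfin.bddAbove
  have hprio : ∀ i, t1 < i → M.prio (ρ i) ≠ 1 := by
    intro i hi h
    have := ht1 (Set.mem_setOf.mpr h)
    omega
  have hS := mem_S_of_run M w hρ
  have hN : ∃ N, ∀ m, N < m → ∃ r, mh M w m r = 2 := by
    by_cases hA : ∀ m, t1 < m → ∃ r, mh M w m r = 2
    · exact ⟨t1, hA⟩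
    · push_neg at hA
      obtain ⟨n, hn1, hn2⟩ := hA
      refine ⟨n, ?_⟩
      have key : ∀ k, mh M w (n+k+1) (ρ (n+k+1)) = 2 := by
        intro k
        induction k with
        | zero =>
            show step M (mh M w (n+0)) (w (n+0)) (ρ (n+0+1)) = 2
            rw [step_eq_two_iff]
            refine ⟨?_, hprio (n+0+1) (by omega)⟩
            rw [if_neg (by simpa using hn2)]
            exact ⟨ρ (n+0), hS (n+0), hρ.2 (n+0)⟩
        | succ k ih =>
            show step M (mh M w (n+k+1)) (w (n+k+1)) (ρ (n+k+1+1)) = 2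
            rw [step_eq_two_iff]
            refine ⟨?_, hprio (n+k+1+1) (by omega)⟩
            rw [if_pos ⟨_, ih⟩]
            exact ⟨ρ (n+k+1), ih, hρ.2 (n+k+1)⟩
      intro m hm
      obtain ⟨k, hk⟩ : ∃ k, m = n+k+1 := ⟨m - (n+1), by omega⟩
      exact ⟨ρ m, by rw [hk]; exact key k⟩
  intro hcon
  obtain ⟨ρ', hρ', hacc⟩ := hcon
  rw [run_eq_mh M w hρ'] at hacc
  obtain ⟨p', hpe', ⟨f, hfp, hfi⟩, -⟩ := hacc
  have hf2 : (MH M).prio f = 2 := by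
    rw [Nat.even_iff] at hpe'
    rcases MH_isBuchi M f with h | h
    · rw [h] at hfp; omega
    · exact h
  have hne2 : ¬∃ q, f q = 2 := (MH_prio_eq_two_iff M f).mp hf2
  obtain ⟨N, hNp⟩ := hN
  obtain ⟨i, hi, hiN⟩ := inf_exists_ge hfi (N+1)
  have hieq : mh M w i = f := hi
  obtain ⟨r, hr⟩ := hNp i (by omega)
  exact hne2 ⟨r, by rw [← hieq]; exact hr⟩

lemma mem_of_not_mem (hc : M.IsCoBuchi) (hw : w ∉ (MH M).Lang) : w ∈ M.Lang := by
  have hfin : {m | ¬∃ r, mh M w m r = 2}.Finite := by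
    by_contra h
    exact hw (mem_lang_of_inf M w h)
  obtain ⟨t1, ht1⟩ := hfin.bddAbove
  obtain ⟨t0, ht0ge, hne⟩ : ∃ t0, 1 ≤ t0 ∧ ∀ n, t0 ≤ n → ∃ r, mh M w n r = 2 := by
    refine ⟨t1 + 1, by omega, ?_⟩
    intro n hn
    by_contra h
    have := ht1 (Set.mem_setOf.mpr h)
    omega
  have h0 : ∃ q, G M w t0 q := G_nonempty M w hne le_rfl
  have hchain2 : ∀ k, mh M w (t0 + k) (chain M w h0 k).1 = 2 := by
    intro k
    exact P_start M w ((chain M w h0 k).2 0) (by omega)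
  have hq0 : mh M w t0 (chain M w h0 0).1 ≠ 0 := by
    have h2 := hchain2 0
    simp only [Nat.add_zero] at h2
    rw [h2]; decide
  obtain ⟨π, hπ0, hπt, hπe⟩ := S_path M w t0 _ hq0
  set ρ : ℕ → M.Q := fun i => if i < t0 then π i else (chain M w h0 (i - t0)).1 with hρdef
  have hρ_ge : ∀ k, ρ (t0 + k) = (chain M w h0 k).1 := by
    intro k
    simp only [hρdef]
    rw [if_neg (by omega)]
    rw [Nat.add_sub_cancel_left]
  have hrun : M.IsRun w ρ := by
    constructor
    · simp only [hρdef]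
      rw [if_pos (by omega)]
      exact hπ0
    · intro i
      rcases Nat.lt_or_ge (i+1) t0 with h | h
      · simp only [hρdef]
        rw [if_pos (by omega), if_pos h]
        exact hπt i (by omega)
      · rcases Nat.lt_or_ge i t0 with h2 | h2
        · have hieq : i + 1 = t0 := by omega
          have h4 := hρ_ge 0
          simp only [Nat.add_zero] at h4
          have h3 : ρ (i+1) = π (i+1) := by
            rw [hieq, h4, hπe]
          rw [h3]
          simp only [hρdef]
          rw [if_pos h2]
          exact hπt i (by omega)
        · obtain ⟨k, rfl⟩ : ∃ k, i = t0 + k := ⟨i - t0, by omega⟩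
          have e1 := hρ_ge k
          have e2 : ρ (t0 + k + 1) = (chain M w h0 (k+1)).1 := hρ_ge (k+1)
          rw [e1, e2]
          show M.trans (chain M w h0 k).1 (w (t0+k)) (ext M w (chain M w h0 k)).1
          exact ext_trans M w (chain M w h0 k)
  have hmh : ∀ i, t0 ≤ i → mh M w i (ρ i) = 2 := by
    intro i hi
    obtain ⟨k, rfl⟩ : ∃ k, i = t0 + k := ⟨i - t0, by omega⟩
    rw [hρ_ge k]
    exact hchain2 k
  have hprio : ∀ q, {i | ρ i = q}.Infinite → M.prio q = 0 := by
    intro q hq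
    obtain ⟨i, hi, hit⟩ := inf_exists_ge hq t0
    have hiq : ρ i = q := hi
    have h2 := hmh i hit
    rw [hiq] at h2
    obtain ⟨j, rfl⟩ : ∃ j, i = j + 1 := ⟨i - 1, by omega⟩
    have h3 := O_prio M w h2
    rcases hc q with h | h
    · exact h
    · exact absurd h h3
  obtain ⟨q, hq⟩ := pigeon ρ
  exact ⟨ρ, hrun, 0, Even.zero, ⟨q, hprio q hq, hq⟩, fun q' hq' => le_of_eq (hprio q' hq')⟩

end MHaux

/-- **Theorem (Miyano-Hayashi).** For every NcoBA with `n` states there is a DBA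
with at most `3^n` states recognising the complement language. -/
theorem ncoba_complementation_determinisation (A : Type) [Fintype A] (M : NPA A)
    (hc : M.IsCoBuchi) :
    ∃ M' : NPA A, M'.Deterministic ∧ M'.IsBuchi ∧ M'.size ≤ 3 ^ M.size ∧
      M'.Lang = M.Langᶜ := by
  classical
  refine ⟨MHaux.MH M, ?_, MHaux.MH_isBuchi M, ?_, ?_⟩
  · intro f a
    exact ⟨MHaux.step M f a, rfl, fun y hy => hy⟩
  · show Fintype.card (M.Q → Fin 3) ≤ 3 ^ Fintype.card M.Q
    rw [Fintype.card_fun, Fintype.card_fin]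
  · ext w'
    simp only [Set.mem_compl_iff]
    constructor
    · exact fun h hL => MHaux.not_mem_of_mem M w' hc hL h
    · intro h
      by_contra h2
      exact h (MHaux.mem_of_not_mem M w' hc h2)
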